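/- Möbius inversion for constructible rank-type functions: Let G be an abelian group, let S = {s₁ < … < s_k < ∞} ⊆ ℝ ∪ {∞} be a finite set, and let d : Dgm → G be a function such that d(I) = d(Ī) whenever Ī is the smallest (under inclusion) interval of Dgm(S) containing I, and d(I) = 0 whenever no interval of Dgm(S) contains I. Then there exists a unique finitely supported function F̃ : Dgm → G satisfying d(I) = Σ_{J ∈ Dgm, J ⊇ I} F̃(J) for every I ∈ Dgm; moreover F̃ vanishes outside Dgm(S) and is given by F̃([s_i, s_j)) = d([s_i,s_j)) − d([s_i,s_{j+1})) + d([s_{i−1},s_{j+1})) − d([s_{i−1},s_j)) and F̃([s_i, ∞)) = d([s_i,∞)) − d([s_{i−1},∞)), with the conventions s_{k+1} = ∞ and s₀ any value strictly less than s₁. -/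

import Mathlib

open CategoryTheory CategoryTheory.Limits
open scoped Classical ENNReal

noncomputable section

universe v u

/-! ## The poset of intervals -/

/-- `Rbar` is `ℝ ∪ {∞}`. -/
abbrev Rbar := WithTop ℝ

/-- An element of the poset `Dgm`: an interval `[p, q)` with `p ≤ q` in `ℝ ∪ {∞}`. -/
structure PDInterval where
  p : Rbar
  q : Rbar
  hle : p ≤ q

namespace PDInterval

/-- `I.Sub J` means `I ⊆ J` as intervals, i.e. `J.p ≤ I.p` and `I.q ≤ J.q`. -/
def Sub (I J : PDInterval) : Prop := J.p ≤ I.p ∧ I.q ≤ J.q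

/-- The diagonal `Δ ⊆ Dgm` consists of the empty intervals `[p, p)`. -/
def onDiag (I : PDInterval) : Prop := I.p = I.q

/-- The interval `[a, b)` with real endpoints. -/
def mk' (a b : ℝ) (h : a ≤ b) : PDInterval := ⟨(a : Rbar), (b : Rbar), by exact_mod_cast h⟩

/-- The interval `[a, ∞)`. -/
def mkInf (a : ℝ) : PDInterval := ⟨(a : Rbar), ⊤, le_top⟩

/-- Membership in `Dgm(S)`, where `S` is a finite set of reals together (implicitly)
with `∞`: both endpoints of `I` lie in `S ∪ {∞}`. -/
def memDgmS (S : Finset ℝ) (I : PDInterval) : Prop :=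
  (I.p = ⊤ ∨ ∃ s ∈ S, I.p = (s : Rbar)) ∧ (I.q = ⊤ ∨ ∃ s ∈ S, I.q = (s : Rbar))

/-- The `ε`-box around an interval `I = [p, q)`: all intervals `[r, s)` with
`p - ε < r ≤ p + ε` and `q - ε ≤ s < q + ε`, declared empty if `q - ε ≤ p + ε`.
For `q = ∞` it consists of the intervals `[r, ∞)` with `p - ε < r ≤ p + ε`. -/
def box (ε : ℝ) (I : PDInterval) : Set PDInterval :=
  if I.p = ⊤ then ∅
  else if I.q = ⊤ then
    { J | J.q = ⊤ ∧ ∃ r : ℝ, J.p = (r : Rbar) ∧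
        I.p.untopD 0 - ε < r ∧ r ≤ I.p.untopD 0 + ε }
  else if I.q.untopD 0 - ε ≤ I.p.untopD 0 + ε then ∅
  else
    { J | ∃ r s : ℝ, J.p = (r : Rbar) ∧ J.q = (s : Rbar) ∧
        I.p.untopD 0 - ε < r ∧ r ≤ I.p.untopD 0 + ε ∧
        I.q.untopD 0 - ε ≤ s ∧ s < I.q.untopD 0 + ε }

/-- The distance between two endpoints in `ℝ ∪ {∞}`; it is `∞` if exactly one of the two
endpoints is `∞`. -/
def edist' : Rbar → Rbar → ℝ≥0∞ := fun a b =>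
  if a = ⊤ then (if b = ⊤ then 0 else ⊤)
  else if b = ⊤ then ⊤
  else ENNReal.ofReal |a.untopD 0 - b.untopD 0|

/-- The distance `max (|p₁ - p₂|, |q₁ - q₂|)` between two intervals. -/
def pairDist (I J : PDInterval) : ℝ≥0∞ := max (edist' I.p J.p) (edist' I.q J.q)

end PDInterval

/-! ## Matchings and the bottleneck distance -/

section Matching

variable {G : Type*} [AddCommGroup G]

/-- A matching between two finitely supported functions `Y₁ Y₂ : Dgm → G`:
a map `γ : Dgm × Dgm → G` whose row sums give `Y₁` off the diagonal and whose column
sums give `Y₂` off the diagonal. -/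
def IsMatching (Y₁ Y₂ : PDInterval → G) (γ : PDInterval → PDInterval → G) : Prop :=
  (∀ I : PDInterval, ¬ I.onDiag →
    (Function.support (γ I)).Finite ∧ Y₁ I = ∑ᶠ J, γ I J) ∧
  (∀ J : PDInterval, ¬ J.onDiag →
    (Function.support (fun I => γ I J)).Finite ∧ Y₂ J = ∑ᶠ I, γ I J)

/-- The norm of a matching: the supremum of `max (|p₁ - p₂|, |q₁ - q₂|)` over all pairs
`I = [p₁, q₁)`, `J = [p₂, q₂)` with `γ I J ≠ 0`. -/
def matchingNorm (γ : PDInterval → PDInterval → G) : ℝ≥0∞ :=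
  ⨆ (I : PDInterval) (J : PDInterval) (_ : γ I J ≠ 0), PDInterval.pairDist I J

/-- The bottleneck distance between two persistence diagrams: the infimum of the norms
of all matchings between them. -/
def bottleneckDist (Y₁ Y₂ : PDInterval → G) : ℝ≥0∞ :=
  ⨅ (γ : PDInterval → PDInterval → G) (_ : IsMatching Y₁ Y₂ γ), matchingNorm γ

end Matching

/-! ## Persistence modules, constructibility, interleavings -/

section PersMod

variable (C : Type u) [Category.{v} C]

/-- A persistence module `F : (ℝ, ≤) → C` is `S`-constructible (for a finite set
`S = {s₁ < ⋯ < s_k} ⊆ ℝ`, to which `∞` is implicitly adjoined) if `F p` is a zero object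
for `p < s₁` and `F (p ≤ q)` is an isomorphism whenever no element of `S` lies in `(p, q]`
and some element of `S` is `≤ p`. -/
def IsConstructibleOn (F : ℝ ⥤ C) (S : Finset ℝ) : Prop :=
  (∀ p : ℝ, (∀ s ∈ S, p < s) → IsZero (F.obj p)) ∧
  (∀ (p q : ℝ) (h : p ≤ q), (∃ s ∈ S, s ≤ p) → (∀ s ∈ S, s ≤ p ∨ q < s) →
    IsIso (F.map (homOfLE h)))

/-- A persistence module is constructible if it is `S`-constructible for some finite `S`. -/
def IsConstructible (F : ℝ ⥤ C) : Prop := ∃ S : Finset ℝ, IsConstructibleOn C F S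

/-- The underlying type of the poset `ℝ ×_ε {0, 1}`. -/
def InterPoset (_ : ℝ) : Type := ℝ × Bool

namespace InterPoset

variable (ε : ℝ)

/-- The partial order on `ℝ ×_ε {0, 1}`: `(p, t) ≤ (q, s)` iff `t = s` and `p ≤ q`, or
`t ≠ s` and `p + ε ≤ q`.  (For `ε < 0` we use `max ε 0` in place of `ε` so that the
order is well defined; all statements only use `ε ≥ 0`, where this agrees with the paper.) -/
instance : Preorder (InterPoset ε) where
  le x y := x.1 + (if x.2 = y.2 then 0 else max ε 0) ≤ y.1
  le_refl x := by simp
  le_trans x y z h₁ h₂ := by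
    have hm : (0 : ℝ) ≤ max ε 0 := le_max_right _ _
    by_cases h12 : x.2 = y.2 <;> by_cases h23 : y.2 = z.2 <;>
      [skip; skip; skip; have hxz : x.2 = z.2 := by
        revert h12 h23; cases x.2 <;> cases y.2 <;> cases z.2 <;> simp] <;>
      simp_all <;> linarith [le_max_right ε (0:ℝ)]

/-- The embedding `ι₀ : ℝ → ℝ ×_ε {0, 1}`, `p ↦ (p, 0)`. -/
def iota0 : ℝ ⥤ InterPoset ε :=
  Monotone.functor (f := fun p => ((p, false) : InterPoset ε))
    (fun _ _ h => by simpa [(· ≤ ·)] using h)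

/-- The embedding `ι₁ : ℝ → ℝ ×_ε {0, 1}`, `p ↦ (p, 1)`. -/
def iota1 : ℝ ⥤ InterPoset ε :=
  Monotone.functor (f := fun p => ((p, true) : InterPoset ε))
    (fun _ _ h => by simpa [(· ≤ ·)] using h)

end InterPoset

/-- Two persistence modules `F` and `G` are `ε`-interleaved if there is a functor
`Φ : ℝ ×_ε {0, 1} → C` whose restrictions along `ι₀` and `ι₁` are naturally isomorphic
to `F` and `G` respectively. -/
def Interleaved (F G : ℝ ⥤ C) (ε : ℝ) : Prop :=
  ∃ Φ : InterPoset ε ⥤ C,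
    Nonempty (InterPoset.iota0 ε ⋙ Φ ≅ F) ∧ Nonempty (InterPoset.iota1 ε ⋙ Φ ≅ G)

/-- The interleaving distance: the infimum of all `ε ≥ 0` such that `F` and `G` are
`ε`-interleaved (`∞` if there is no interleaving). -/
def interleavingDist (F G : ℝ ⥤ C) : ℝ≥0∞ :=
  sInf { x : ℝ≥0∞ | ∃ ε : ℝ, 0 ≤ ε ∧ Interleaved C F G ε ∧ x = ENNReal.ofReal ε }

end PersMod

/-! ## The Grothendieck group -/

section K0

variable (C : Type u) [Category.{v} C] [Limits.HasZeroMorphisms C]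

/-- The subgroup of relations coming from short exact sequences `0 → a → b → c → 0`:
it is generated by the elements `[b] - ([a] + [c])`. -/
def sesRelations : AddSubgroup (FreeAbelianGroup C) :=
  AddSubgroup.closure { x | ∃ S : ShortComplex C, S.ShortExact ∧
    x = FreeAbelianGroup.of S.X₂ - (FreeAbelianGroup.of S.X₁ + FreeAbelianGroup.of S.X₃) }

/-- The Grothendieck group of `C`: the free abelian group on the objects of `C` modulo one
relation `[b] = [a] + [c]` for each short exact sequence `0 → a → b → c → 0`.  (Isomorphic
objects automatically get identified, via the short exact sequences `0 → a → b → 0 → 0`.) -/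
def K0 : Type u := FreeAbelianGroup C ⧸ sesRelations C

instance : AddCommGroup (K0 C) := by unfold K0; infer_instance

/-- The class `[a] ∈ K0 C` of an object `a` of `C`. -/
def K0.mk (a : C) : K0 C := QuotientAddGroup.mk (FreeAbelianGroup.of a)

/-- The translation-invariant partial order on the Grothendieck group:
`x ⪯ y` iff `y - x = [c]` for some object `c` of `C`. -/
def K0.le (x y : K0 C) : Prop := ∃ c : C, y - x = K0.mk C c

end K0

/-! ## The rank function and the persistence diagram -/

section Rank

variable (C : Type u) [Category.{v} C] [Abelian C]

/-- The class in `K0 C` of the image of the structure map `F (a ≤ b)`. -/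
def K0.imageClass (F : ℝ ⥤ C) {a b : ℝ} (h : a ≤ b) : K0 C :=
  K0.mk C (Limits.image (F.map (homOfLE h)))

/-- The hypothesis on the auxiliary constant `δ > 0` used to define the rank function of an
`S`-constructible module: `s_{i-1} < s_i - δ` for consecutive elements of `S`. -/
def GoodDelta (S : Finset ℝ) (δ : ℝ) : Prop :=
  0 < δ ∧ ∀ s ∈ S, ∀ s' ∈ S, s < s' → s < s' - δ

/-- The rank function `dF : Dgm → K0 C` of an `S`-constructible persistence module `F`
(relative to the auxiliary constant `δ`): for `I = [p, s)` with `s ∈ S` it is the class of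
the image of `F (p ≤ s - δ)`; for `I = [p, ∞)` it is the class of the image of `F (p ≤ z)`
for `z ≥ max p (max S)`; and for all other `I = [p, q)` it is the class of the image of
`F (p ≤ q)`.  (Endpoints are adjusted, using constructibility, so that the formula makes
sense for every interval of `Dgm`.) -/
def rankFn (F : ℝ ⥤ C) (S : Finset ℝ) (δ : ℝ) (I : PDInterval) : K0 C :=
  let M : ℝ := (if h : S.Nonempty then S.max' h else 0) + 1
  let lp : ℝ := I.p.untopD M
  let q' : ℝ :=
    if I.q = ⊤ then max lp M
    else if I.q.untopD 0 ∈ S then I.q.untopD 0 - δ else I.q.untopD 0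
  K0.imageClass C F (min_le_right lp q')

/-- `Ft` is the persistence diagram of the `S`-constructible module `F` (with rank function
taken relative to `δ`): it is finitely supported and satisfies the Möbius inversion formula
`dF I = ∑_{J ⊇ I} Ft J` for every interval `I ∈ Dgm`. -/
def IsPersDiagramOf (F : ℝ ⥤ C) (S : Finset ℝ) (δ : ℝ) (Ft : PDInterval → K0 C) : Prop :=
  (Function.support Ft).Finite ∧
  ∀ I : PDInterval, rankFn C F S δ I = ∑ᶠ (J : PDInterval) (_ : I.Sub J), Ft J

end Rank

end

/-- `Ibar` is the smallest interval of `Dgm(S)` (under inclusion) containing `I`. -/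
def IsSmallestContaining (S : Finset ℝ) (I Ibar : PDInterval) : Prop :=
  Ibar.memDgmS S ∧ I.Sub Ibar ∧ ∀ J : PDInterval, J.memDgmS S → I.Sub J → Ibar.Sub J



noncomputable section MobiusAuxSection

@[ext] lemma PDInterval.ext' {I J : PDInterval} (hp : I.p = J.p) (hq : I.q = J.q) : I = J := by
  cases I; cases J; simp_all

lemma PDInterval.Sub.refl (I : PDInterval) : I.Sub I := ⟨le_refl _, le_refl _⟩

lemma PDInterval.Sub.trans {I J K : PDInterval} (h1 : I.Sub J) (h2 : J.Sub K) : I.Sub K :=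
  ⟨h2.1.trans h1.1, h1.2.trans h2.2⟩

namespace MobiusAux

variable {G : Type*} [AddCommGroup G]

/-- `D d p q = d [p,q)` if `p ≤ q`, else `0`. -/
def D (d : PDInterval → G) (p q : Rbar) : G := if h : p ≤ q then d ⟨p, q, h⟩ else 0

/-- successor of `b` in the finset `B` (as an element of `Rbar`, `⊤` if none). -/
def nxtF (B : Finset ℝ) (b : ℝ) : Rbar :=
  if h : (B.filter fun x => b < x).Nonempty then (((B.filter fun x => b < x).min' h : ℝ) : Rbar)
  else ⊤

def g (d : PDInterval → G) (S : Finset ℝ) (a : ℝ) (b : Rbar) : G :=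
  if b = ⊤ then D d (a : Rbar) ⊤
  else D d (a : Rbar) b - D d (a : Rbar) (nxtF S (b.untopD 0))

/-- `v a` minus `v` of the predecessor of `a` in `A` (or `0` if there is none). -/
def prdTerm (A : Finset ℝ) (v : ℝ → G) (a : ℝ) : G :=
  v a - (if h : (A.filter fun x => x < a).Nonempty then v ((A.filter fun x => x < a).max' h)
         else 0)

def Ft (d : PDInterval → G) (S : Finset ℝ) (I : PDInterval) : G :=
  if I.memDgmS S then
    if I.p = ⊤ then D d ⊤ ⊤ - (if h : S.Nonempty then D d ((S.max' h : ℝ) : Rbar) ⊤ else 0)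
    else prdTerm S (fun x => g d S x I.q) (I.p.untopD 0)
  else 0

/-- interval `[a, max a b)`; equals `mk' a b` when `a ≤ b`. -/
def mkI (a b : ℝ) : PDInterval :=
  ⟨(a : Rbar), ((max a b : ℝ) : Rbar), by exact_mod_cast le_max_left a b⟩

@[simp] lemma mkI_p (a b : ℝ) : (mkI a b).p = (a : Rbar) := rfl
@[simp] lemma mkI_q (a b : ℝ) : (mkI a b).q = ((max a b : ℝ) : Rbar) := rfl
@[simp] lemma mkInf_p (a : ℝ) : (PDInterval.mkInf a).p = (a : Rbar) := rfl
@[simp] lemma mkInf_q (a : ℝ) : (PDInterval.mkInf a).q = (⊤ : Rbar) := rfl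
@[simp] lemma mk'_p (a b : ℝ) (h : a ≤ b) : (PDInterval.mk' a b h).p = (a : Rbar) := rfl
@[simp] lemma mk'_q (a b : ℝ) (h : a ≤ b) : (PDInterval.mk' a b h).q = (b : Rbar) := rfl

def DgmFin (S : Finset ℝ) : Finset PDInterval :=
  ((S ×ˢ S).image fun ab => mkI ab.1 ab.2) ∪ S.image PDInterval.mkInf ∪ {⟨⊤, ⊤, le_refl ⊤⟩}

lemma mem_DgmFin_of_mem {S : Finset ℝ} {I : PDInterval} (hI : I.memDgmS S) : I ∈ DgmFin S := by
  obtain ⟨hp, hq⟩ := hI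
  rcases hp with hp | ⟨a, ha, hp⟩
  · have hq' : I.q = ⊤ := top_le_iff.mp (hp ▸ I.hle)
    refine Finset.mem_union_right _ ?_
    simp only [Finset.mem_singleton]
    ext <;> simp [hp, hq']
  · rcases hq with hq | ⟨b, hb, hq⟩
    · refine Finset.mem_union_left _ (Finset.mem_union_right _ ?_)
      simp only [Finset.mem_image]
      exact ⟨a, ha, by ext <;> simp [PDInterval.mkInf, hp, hq]⟩
    · refine Finset.mem_union_left _ (Finset.mem_union_left _ ?_)
      simp only [Finset.mem_image, Finset.mem_product]
      refine ⟨(a, b), by simp [ha, hb], ?_⟩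
      have hab : a ≤ b := by
        have := I.hle; rw [hp, hq] at this; exact_mod_cast this
      ext <;> simp [mkI, hp, hq, max_eq_right hab]

lemma mem_of_mem_DgmFin {S : Finset ℝ} {I : PDInterval} (hI : I ∈ DgmFin S) : I.memDgmS S := by
  simp only [DgmFin, Finset.mem_union, Finset.mem_image, Finset.mem_product,
    Finset.mem_singleton] at hI
  rcases hI with (⟨⟨a, b⟩, ⟨ha, hb⟩, rfl⟩ | ⟨a, ha, rfl⟩) | rfl
  · constructor
    · exact Or.inr ⟨a, ha, rfl⟩
    · rcases max_choice a b with h | h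
      · exact Or.inr ⟨a, ha, by simp [mkI, h]⟩
      · exact Or.inr ⟨b, hb, by simp [mkI, h]⟩
  · exact ⟨Or.inr ⟨a, ha, rfl⟩, Or.inl rfl⟩
  · exact ⟨Or.inl rfl, Or.inl rfl⟩

lemma filter_lt_erase_max' (A : Finset ℝ) (hA : A.Nonempty) :
    A.filter (fun x => x < A.max' hA) = A.erase (A.max' hA) := by
  ext x
  simp only [Finset.mem_filter, Finset.mem_erase]
  constructor
  · rintro ⟨hx, hlt⟩; exact ⟨ne_of_lt hlt, hx⟩
  · rintro ⟨hne, hx⟩; exact ⟨hx, lt_of_le_of_ne (A.le_max' x hx) hne⟩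

lemma filter_gt_erase_min' (A : Finset ℝ) (hA : A.Nonempty) :
    A.filter (fun x => A.min' hA < x) = A.erase (A.min' hA) := by
  ext x
  simp only [Finset.mem_filter, Finset.mem_erase]
  constructor
  · rintro ⟨hx, hlt⟩; exact ⟨(ne_of_lt hlt).symm, hx⟩
  · rintro ⟨hne, hx⟩; exact ⟨hx, lt_of_le_of_ne (A.min'_le x hx) (Ne.symm hne)⟩

lemma tele_max (A : Finset ℝ) (v : ℝ → G) :
    ∑ a ∈ A, prdTerm A v a = if h : A.Nonempty then v (A.max' h) else 0 := by
  induction A using Finset.strongInduction with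
  | _ A ih =>
    rcases A.eq_empty_or_nonempty with rfl | hA
    · simp
    · rw [dif_pos hA]
      set m := A.max' hA with hm
      have hmem : m ∈ A := A.max'_mem hA
      have hkey : A.filter (fun x => x < m) = A.erase m := filter_lt_erase_max' A hA
      rw [← Finset.add_sum_erase A _ hmem]
      have hcong : ∀ a ∈ A.erase m, prdTerm A v a = prdTerm (A.erase m) v a := by
        intro a ha
        have ham : a < m := lt_of_le_of_ne (A.le_max' a (Finset.mem_of_mem_erase ha))
          (Finset.ne_of_mem_erase ha)
        have : A.filter (fun x => x < a) = (A.erase m).filter (fun x => x < a) := by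
          ext x
          simp only [Finset.mem_filter, Finset.mem_erase]
          constructor
          · rintro ⟨hx, hlt⟩; exact ⟨⟨ne_of_lt (hlt.trans ham), hx⟩, hlt⟩
          · rintro ⟨⟨_, hx⟩, hlt⟩; exact ⟨hx, hlt⟩
        simp only [prdTerm, this]
      rw [Finset.sum_congr rfl hcong, ih _ (Finset.erase_ssubset hmem)]
      simp only [prdTerm, hkey]
      by_cases h : (A.erase m).Nonempty
      · simp only [dif_pos h]; abel
      · simp only [dif_neg h]; abel

lemma tele_min (B : Finset ℝ) (u : Rbar → G) :
    (∑ b ∈ B, (u b - u (nxtF B b))) + u ⊤ =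
      if h : B.Nonempty then u ((B.min' h : ℝ) : Rbar) else u ⊤ := by
  induction B using Finset.strongInduction with
  | _ B ih =>
    rcases B.eq_empty_or_nonempty with rfl | hB
    · simp
    · rw [dif_pos hB]
      set m := B.min' hB with hm
      have hmem : m ∈ B := B.min'_mem hB
      have hkey : B.filter (fun x => m < x) = B.erase m := filter_gt_erase_min' B hB
      rw [← Finset.add_sum_erase B _ hmem]
      have hcong : ∀ b ∈ B.erase m, u b - u (nxtF B b) = u b - u (nxtF (B.erase m) b) := by
        intro b hb
        have hmb : m < b := lt_of_le_of_ne (B.min'_le b (Finset.mem_of_mem_erase hb))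
          (Ne.symm (Finset.ne_of_mem_erase hb))
        have : B.filter (fun x => b < x) = (B.erase m).filter (fun x => b < x) := by
          ext x
          simp only [Finset.mem_filter, Finset.mem_erase]
          constructor
          · rintro ⟨hx, hlt⟩; exact ⟨⟨ne_of_gt (hmb.trans hlt), hx⟩, hlt⟩
          · rintro ⟨⟨_, hx⟩, hlt⟩; exact ⟨hx, hlt⟩
        simp only [nxtF, this]
      rw [Finset.sum_congr rfl hcong]
      have hnm : u (nxtF B m) = if h : (B.erase m).Nonempty
          then u (((B.erase m).min' h : ℝ) : Rbar) else u ⊤ := by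
        simp only [nxtF, hkey]
        by_cases h : (B.erase m).Nonempty
        · rw [dif_pos h, dif_pos h]
        · rw [dif_neg h, dif_neg h]
      have := ih (B.erase m) (Finset.erase_ssubset hmem)
      rw [add_assoc, this, hnm]
      abel

lemma prdTerm_filter (S : Finset ℝ) {c a : ℝ} (hac : a ≤ c) (v : ℝ → G) :
    prdTerm S v a = prdTerm (S.filter fun x => x ≤ c) v a := by
  have h : S.filter (fun x => x < a) = (S.filter fun x => x ≤ c).filter (fun x => x < a) := by
    rw [Finset.filter_filter]
    apply Finset.filter_congr
    intro x _
    constructor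
    · intro hx; exact ⟨le_trans (le_of_lt hx) hac, hx⟩
    · intro hx; exact hx.2
  simp only [prdTerm, h]

lemma nxtF_filter (S : Finset ℝ) {c b : ℝ} (hcb : c ≤ b) :
    nxtF S b = nxtF (S.filter fun x => c ≤ x) b := by
  have h : S.filter (fun x => b < x) = (S.filter fun x => c ≤ x).filter (fun x => b < x) := by
    rw [Finset.filter_filter]
    apply Finset.filter_congr
    intro x _
    constructor
    · intro hx; exact ⟨le_trans hcb (le_of_lt hx), hx⟩
    · intro hx; exact hx.2
  simp only [nxtF, h]

lemma prdTerm_add (A : Finset ℝ) (v w : ℝ → G) (a : ℝ) :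
    prdTerm A (fun x => v x + w x) a = prdTerm A v a + prdTerm A w a := by
  unfold prdTerm
  by_cases h : (A.filter fun x => x < a).Nonempty
  · simp only [dif_pos h]; abel
  · simp only [dif_neg h]; abel

lemma prdTerm_sum {β : Type*} (A : Finset ℝ) (B : Finset β) (f : β → ℝ → G) (a : ℝ) :
    ∑ b ∈ B, prdTerm A (f b) a = prdTerm A (fun x => ∑ b ∈ B, f b x) a := by
  induction B using Finset.cons_induction with
  | empty => simp [prdTerm]
  | cons b B hb ih =>
    rw [Finset.sum_cons, ih, ← prdTerm_add]
    congr 1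
    funext x
    rw [Finset.sum_cons]

lemma max'_filter_le (S : Finset ℝ) {A : ℝ} (hA : A ∈ S)
    (h : (S.filter fun x => x ≤ A).Nonempty) : (S.filter fun x => x ≤ A).max' h = A := by
  apply le_antisymm
  · exact Finset.max'_le _ _ _ fun x hx => (Finset.mem_filter.mp hx).2
  · exact Finset.le_max' (S.filter fun x => x ≤ A) A (Finset.mem_filter.mpr ⟨hA, le_refl _⟩)

lemma min'_filter_ge (S : Finset ℝ) {B : ℝ} (hB : B ∈ S)
    (h : (S.filter fun x => B ≤ x).Nonempty) : (S.filter fun x => B ≤ x).min' h = B := by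
  apply le_antisymm
  · exact Finset.min'_le _ _ (Finset.mem_filter.mpr ⟨hB, le_refl _⟩)
  · exact Finset.le_min' _ _ _ fun x hx => (Finset.mem_filter.mp hx).2

lemma filter_le_nonempty (S : Finset ℝ) {A : ℝ} (hA : A ∈ S) :
    (S.filter fun x => x ≤ A).Nonempty := ⟨A, Finset.mem_filter.mpr ⟨hA, le_refl _⟩⟩

lemma filter_ge_nonempty (S : Finset ℝ) {B : ℝ} (hB : B ∈ S) :
    (S.filter fun x => B ≤ x).Nonempty := ⟨B, Finset.mem_filter.mpr ⟨hB, le_refl _⟩⟩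

lemma Ft_mkInf (d : PDInterval → G) (S : Finset ℝ) {a : ℝ} (ha : a ∈ S) :
    Ft d S (PDInterval.mkInf a) = prdTerm S (fun x => g d S x ⊤) a := by
  have hmem : (PDInterval.mkInf a).memDgmS S := ⟨Or.inr ⟨a, ha, rfl⟩, Or.inl rfl⟩
  simp [Ft, hmem, PDInterval.mkInf, WithTop.coe_ne_top]
  intro h
  exact absurd hmem h

lemma Ft_mk' (d : PDInterval → G) (S : Finset ℝ) {a b : ℝ} (hab : a ≤ b)
    (ha : a ∈ S) (hb : b ∈ S) :
    Ft d S (PDInterval.mk' a b hab) = prdTerm S (fun x => g d S x (b : Rbar)) a := by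
  have hmem : (PDInterval.mk' a b hab).memDgmS S := ⟨Or.inr ⟨a, ha, rfl⟩, Or.inr ⟨b, hb, rfl⟩⟩
  simp [Ft, hmem, PDInterval.mk', WithTop.coe_ne_top]
  intro h
  exact absurd hmem h


lemma g_top (d : PDInterval → G) (S : Finset ℝ) (x : ℝ) : g d S x ⊤ = D d (x : Rbar) ⊤ := by
  simp [g]

lemma g_coe (d : PDInterval → G) (S : Finset ℝ) (x b : ℝ) :
    g d S x ((b : ℝ) : Rbar) = D d (x : Rbar) (b : Rbar) - D d (x : Rbar) (nxtF S b) := by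
  simp [g, WithTop.coe_ne_top]

lemma Ft_top (d : PDInterval → G) (S : Finset ℝ) :
    Ft d S ⟨⊤, ⊤, le_refl ⊤⟩ =
      D d ⊤ ⊤ - (if h : S.Nonempty then D d ((S.max' h : ℝ) : Rbar) ⊤ else 0) := by
  have hmem : (⟨⊤, ⊤, le_refl ⊤⟩ : PDInterval).memDgmS S := ⟨Or.inl rfl, Or.inl rfl⟩
  simp [Ft, hmem]

lemma mkInf_injOn (S : Finset ℝ) :
    ∀ a ∈ S, ∀ b ∈ S, PDInterval.mkInf a = PDInterval.mkInf b → a = b := by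
  intro a _ b _ h
  exact WithTop.coe_injective (congrArg PDInterval.p h)

lemma sub_top_iff (J : PDInterval) :
    (PDInterval.Sub ⟨⊤, ⊤, le_refl ⊤⟩ J) ↔ J.q = ⊤ := by
  constructor
  · intro h; exact top_le_iff.mp h.2
  · intro h; exact ⟨le_top, le_of_eq h.symm⟩

lemma filter_top (S : Finset ℝ) :
    (DgmFin S).filter (fun J => PDInterval.Sub ⟨⊤, ⊤, le_refl ⊤⟩ J)
      = insert ⟨⊤, ⊤, le_refl ⊤⟩ (S.image PDInterval.mkInf) := by
  ext J
  simp only [Finset.mem_filter, Finset.mem_insert, Finset.mem_image, sub_top_iff]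
  constructor
  · rintro ⟨hJ, hq⟩
    simp only [DgmFin, Finset.mem_union, Finset.mem_image, Finset.mem_product,
      Finset.mem_singleton] at hJ
    rcases hJ with (⟨⟨a, b⟩, ⟨ha, hb⟩, rfl⟩ | ⟨a, ha, rfl⟩) | rfl
    · exact absurd hq (WithTop.coe_ne_top)
    · exact Or.inr ⟨a, ha, rfl⟩
    · exact Or.inl rfl
  · rintro (rfl | ⟨a, ha, rfl⟩)
    · exact ⟨Finset.mem_union_right _ (Finset.mem_singleton_self _), rfl⟩
    · exact ⟨Finset.mem_union_left _
        (Finset.mem_union_right _ (Finset.mem_image_of_mem _ ha)), rfl⟩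

lemma sum_top (d : PDInterval → G) (S : Finset ℝ) :
    ∑ J ∈ (DgmFin S).filter (fun J => PDInterval.Sub ⟨⊤, ⊤, le_refl ⊤⟩ J), Ft d S J
      = D d ⊤ ⊤ := by
  rw [filter_top]
  have hnot : (⟨⊤, ⊤, le_refl ⊤⟩ : PDInterval) ∉ S.image PDInterval.mkInf := by
    simp only [Finset.mem_image, not_exists]
    rintro a ⟨ha, h⟩
    exact WithTop.coe_ne_top (congrArg PDInterval.p h)
  rw [Finset.sum_insert hnot, Finset.sum_image (mkInf_injOn S)]
  have hcong : ∀ a ∈ S, Ft d S (PDInterval.mkInf a) = prdTerm S (fun x => g d S x ⊤) a :=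
    fun a ha => Ft_mkInf d S ha
  rw [Finset.sum_congr rfl hcong, tele_max, Ft_top]
  by_cases h : S.Nonempty
  · simp only [dif_pos h, g_top]; abel
  · simp only [dif_neg h]; abel

lemma filter_inf (S : Finset ℝ) {A : ℝ} (hA : A ∈ S) :
    (DgmFin S).filter (fun J => (PDInterval.mkInf A).Sub J)
      = (S.filter fun x => x ≤ A).image PDInterval.mkInf := by
  ext J
  constructor
  · intro h
    obtain ⟨hJ, hp, hq⟩ := Finset.mem_filter.mp h
    simp only [DgmFin, Finset.mem_union, Finset.mem_image, Finset.mem_product,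
      Finset.mem_singleton] at hJ
    rcases hJ with (⟨⟨a, b⟩, ⟨ha, hb⟩, rfl⟩ | ⟨a, ha, rfl⟩) | rfl
    · exact absurd (top_le_iff.mp hq) (WithTop.coe_ne_top)
    · apply Finset.mem_image_of_mem
      refine Finset.mem_filter.mpr ⟨ha, ?_⟩
      simp only [mkInf_p] at hp
      exact_mod_cast hp
    · exact absurd ((top_le_iff.mp hp).symm) (fun hc => WithTop.coe_ne_top (α := ℝ) hc.symm)
  · intro h
    obtain ⟨a, ha, rfl⟩ := Finset.mem_image.mp h
    obtain ⟨haS, haA⟩ := Finset.mem_filter.mp ha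
    refine Finset.mem_filter.mpr ⟨mem_DgmFin_of_mem ⟨Or.inr ⟨a, haS, rfl⟩, Or.inl rfl⟩, ?_, le_refl _⟩
    show (a : Rbar) ≤ (A : Rbar)
    exact_mod_cast haA

lemma sum_inf (d : PDInterval → G) (S : Finset ℝ) {A : ℝ} (hA : A ∈ S) :
    ∑ J ∈ (DgmFin S).filter (fun J => (PDInterval.mkInf A).Sub J), Ft d S J
      = D d (A : Rbar) ⊤ := by
  rw [filter_inf S hA]
  have hinj : ∀ a ∈ S.filter (fun x => x ≤ A), ∀ b ∈ S.filter (fun x => x ≤ A),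
      PDInterval.mkInf a = PDInterval.mkInf b → a = b := by
    intro a _ b _ h
    exact WithTop.coe_injective (congrArg PDInterval.p h)
  rw [Finset.sum_image hinj]
  have hcong : ∀ a ∈ S.filter (fun x => x ≤ A),
      Ft d S (PDInterval.mkInf a)
        = prdTerm (S.filter fun x => x ≤ A) (fun x => g d S x ⊤) a := by
    intro a ha
    obtain ⟨haS, haA⟩ := Finset.mem_filter.mp ha
    rw [Ft_mkInf d S haS, prdTerm_filter S haA]
  rw [Finset.sum_congr rfl hcong, tele_max, dif_pos (filter_le_nonempty S hA),
    max'_filter_le S hA, g_top]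

lemma filter_ab (S : Finset ℝ) {A B : ℝ} (hA : A ∈ S) (hB : B ∈ S) (hAB : A ≤ B) :
    (DgmFin S).filter (fun J => (PDInterval.mk' A B hAB).Sub J)
      = ((S.filter fun x => x ≤ A) ×ˢ (S.filter fun x => B ≤ x)).image
          (fun ab => mkI ab.1 ab.2)
        ∪ (S.filter fun x => x ≤ A).image PDInterval.mkInf := by
  ext J
  constructor
  · intro h
    obtain ⟨hJ, hp, hq⟩ := Finset.mem_filter.mp h
    simp only [DgmFin, Finset.mem_union, Finset.mem_image, Finset.mem_product,
      Finset.mem_singleton] at hJ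
    rcases hJ with (⟨⟨a, b⟩, ⟨ha, hb⟩, rfl⟩ | ⟨a, ha, rfl⟩) | rfl
    · apply Finset.mem_union_left
      simp only [mkI_p, mkI_q, mk'_p, mk'_q] at hp hq
      have hp' : a ≤ A := by exact_mod_cast hp
      have hq' : B ≤ max a b := by exact_mod_cast hq
      have hmax : max a b ∈ S := by
        rcases max_choice a b with hm | hm <;> rw [hm] <;> assumption
      have hmm : mkI a (max a b) = mkI a b := by
        ext
        · rfl
        · show ((max a (max a b) : ℝ) : Rbar) = ((max a b : ℝ) : Rbar)
          rw [← max_assoc, max_self]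
      rw [← hmm]
      exact Finset.mem_image.mpr ⟨(a, max a b), Finset.mem_product.mpr
        ⟨Finset.mem_filter.mpr ⟨ha, hp'⟩, Finset.mem_filter.mpr ⟨hmax, hq'⟩⟩, rfl⟩
    · apply Finset.mem_union_right
      apply Finset.mem_image_of_mem
      refine Finset.mem_filter.mpr ⟨ha, ?_⟩
      simp only [mkInf_p, mk'_p] at hp
      exact_mod_cast hp
    · exact absurd ((top_le_iff.mp hp).symm) (fun hc => WithTop.coe_ne_top (α := ℝ) hc.symm)
  · intro h
    rcases Finset.mem_union.mp h with h1 | h1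
    · obtain ⟨⟨a, b⟩, hab, rfl⟩ := Finset.mem_image.mp h1
      obtain ⟨ha, hb⟩ := Finset.mem_product.mp hab
      obtain ⟨haS, haA⟩ := Finset.mem_filter.mp ha
      obtain ⟨hbS, hbB⟩ := Finset.mem_filter.mp hb
      refine Finset.mem_filter.mpr ⟨?_, ?_, ?_⟩
      · apply mem_DgmFin_of_mem
        constructor
        · exact Or.inr ⟨a, haS, rfl⟩
        · rcases max_choice a b with hm | hm
          · exact Or.inr ⟨a, haS, by rw [mkI_q, hm]⟩
          · exact Or.inr ⟨b, hbS, by rw [mkI_q, hm]⟩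
      · show (a : Rbar) ≤ (A : Rbar)
        exact_mod_cast haA
      · show (B : Rbar) ≤ ((max a b : ℝ) : Rbar)
        exact_mod_cast le_trans hbB (le_max_right a b)
    · obtain ⟨a, ha, rfl⟩ := Finset.mem_image.mp h1
      obtain ⟨haS, haA⟩ := Finset.mem_filter.mp ha
      refine Finset.mem_filter.mpr ⟨mem_DgmFin_of_mem ⟨Or.inr ⟨a, haS, rfl⟩, Or.inl rfl⟩,
        ?_, le_top⟩
      show (a : Rbar) ≤ (A : Rbar)
      exact_mod_cast haA

lemma sum_ab (d : PDInterval → G) (S : Finset ℝ) {A B : ℝ} (hA : A ∈ S) (hB : B ∈ S)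
    (hAB : A ≤ B) :
    ∑ J ∈ (DgmFin S).filter (fun J => (PDInterval.mk' A B hAB).Sub J), Ft d S J
      = D d (A : Rbar) (B : Rbar) := by
  set Aset := S.filter (fun x => x ≤ A) with hAset
  set Bset := S.filter (fun x => B ≤ x) with hBset
  have hdisj : Disjoint ((Aset ×ˢ Bset).image (fun ab => mkI ab.1 ab.2))
      (Aset.image PDInterval.mkInf) := by
    rw [Finset.disjoint_left]
    rintro J hJ1 hJ2
    simp only [Finset.mem_image] at hJ1 hJ2
    obtain ⟨ab, _, rfl⟩ := hJ1
    obtain ⟨a, _, ha⟩ := hJ2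
    have : ((max ab.1 ab.2 : ℝ) : Rbar) = ⊤ := congrArg PDInterval.q ha.symm
    exact WithTop.coe_ne_top this
  have hinj1 : ∀ x ∈ Aset ×ˢ Bset, ∀ y ∈ Aset ×ˢ Bset,
      mkI x.1 x.2 = mkI y.1 y.2 → x = y := by
    rintro ⟨a, b⟩ hx ⟨a', b'⟩ hy h
    obtain ⟨hax, hbx⟩ := Finset.mem_product.mp hx
    obtain ⟨hay, hby⟩ := Finset.mem_product.mp hy
    have hab : a ≤ b := le_trans (Finset.mem_filter.mp hax).2
      (le_trans hAB (Finset.mem_filter.mp hbx).2)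
    have hab' : a' ≤ b' := le_trans (Finset.mem_filter.mp hay).2
      (le_trans hAB (Finset.mem_filter.mp hby).2)
    have h1 : a = a' := WithTop.coe_injective (congrArg PDInterval.p h)
    have h2 : (max a b : ℝ) = max a' b' := WithTop.coe_injective (congrArg PDInterval.q h)
    rw [max_eq_right hab, max_eq_right hab'] at h2
    exact Prod.ext h1 h2
  have hinj2 : ∀ a ∈ Aset, ∀ b ∈ Aset, PDInterval.mkInf a = PDInterval.mkInf b → a = b := by
    intro a _ b _ h
    exact WithTop.coe_injective (congrArg PDInterval.p h)
  rw [filter_ab S hA hB hAB, Finset.sum_union hdisj, Finset.sum_image hinj1,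
    Finset.sum_image hinj2, Finset.sum_product, ← Finset.sum_add_distrib]
  have hterm : ∀ a ∈ Aset,
      ((∑ b ∈ Bset, Ft d S (mkI a b)) + Ft d S (PDInterval.mkInf a))
        = prdTerm Aset (fun x => (∑ b ∈ Bset, g d S x ((b : ℝ) : Rbar)) + g d S x ⊤) a := by
    intro a ha
    obtain ⟨haS, haA⟩ := Finset.mem_filter.mp ha
    have h1 : ∀ b ∈ Bset, Ft d S (mkI a b)
        = prdTerm Aset (fun x => g d S x ((b : ℝ) : Rbar)) a := by
      intro b hb
      obtain ⟨hbS, hbB⟩ := Finset.mem_filter.mp hb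
      have hab : a ≤ b := le_trans haA (le_trans hAB hbB)
      have hmk : mkI a b = PDInterval.mk' a b hab := by
        ext
        · rfl
        · show ((max a b : ℝ) : Rbar) = ((b : ℝ) : Rbar)
          rw [max_eq_right hab]
      rw [hmk, Ft_mk' d S hab haS hbS, hAset, prdTerm_filter S haA]
    rw [Finset.sum_congr rfl h1, Ft_mkInf d S haS, hAset, prdTerm_filter S haA,
      prdTerm_sum, ← prdTerm_add]
  rw [Finset.sum_congr rfl hterm, tele_max, dif_pos (filter_le_nonempty S hA)]
  have hmax : Aset.max' (filter_le_nonempty S hA) = A := max'_filter_le S hA _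
  rw [hmax]
  have h2 : ∀ b ∈ Bset, g d S A ((b : ℝ) : Rbar)
      = D d (A : Rbar) (b : Rbar) - D d (A : Rbar) (nxtF Bset b) := by
    intro b hb
    rw [g_coe, hBset, nxtF_filter S (Finset.mem_filter.mp hb).2]
  rw [Finset.sum_congr rfl h2, g_top]
  have h3 := tele_min Bset (fun x => D d (A : Rbar) x)
  rw [dif_pos (filter_ge_nonempty S hB), min'_filter_ge S hB] at h3
  exact h3

lemma D_eq (d : PDInterval → G) (I : PDInterval) : D d I.p I.q = d I := by
  rw [D, dif_pos I.hle]

lemma sum_Ft (d : PDInterval → G) (S : Finset ℝ) (K : PDInterval) (hK : K.memDgmS S) :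
    ∑ J ∈ (DgmFin S).filter (fun J => K.Sub J), Ft d S J = d K := by
  obtain ⟨hp, hq⟩ := hK
  rcases hp with hp | ⟨A, hA, hp⟩
  · have hq' : K.q = ⊤ := top_le_iff.mp (hp ▸ K.hle)
    have hKeq : K = ⟨⊤, ⊤, le_refl ⊤⟩ := PDInterval.ext' hp hq'
    rw [hKeq, sum_top]
    exact D_eq d ⟨⊤, ⊤, le_refl ⊤⟩
  · rcases hq with hq | ⟨B, hB, hq⟩
    · have hKeq : K = PDInterval.mkInf A := PDInterval.ext' hp hq
      rw [hKeq, sum_inf d S hA]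
      exact D_eq d (PDInterval.mkInf A)
    · have hAB : A ≤ B := by
        have := K.hle; rw [hp, hq] at this; exact_mod_cast this
      have hKeq : K = PDInterval.mk' A B hAB := PDInterval.ext' hp hq
      rw [hKeq, sum_ab d S hA hB hAB]
      exact D_eq d (PDInterval.mk' A B hAB)


lemma coe_untop'_eq {p : Rbar} (hp : p ≠ ⊤) : ((p.untopD 0 : ℝ) : Rbar) = p := by
  lift p to ℝ using hp
  rfl

lemma Ft_not_mem (d : PDInterval → G) (S : Finset ℝ) {I : PDInterval}
    (h : ¬ I.memDgmS S) : Ft d S I = 0 := by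
  rw [Ft, if_neg h]

lemma Ft_support_subset (d : PDInterval → G) (S : Finset ℝ) :
    Function.support (Ft d S) ⊆ ↑(DgmFin S) := by
  intro I hI
  rw [Function.mem_support] at hI
  by_cases h : I.memDgmS S
  · exact mem_DgmFin_of_mem h
  · exact absurd (Ft_not_mem d S h) hI

lemma smallest_or_none (S : Finset ℝ) (I : PDInterval) :
    (∃ Ibar, IsSmallestContaining S I Ibar) ∨
      (∀ J : PDInterval, J.memDgmS S → ¬ I.Sub J) := by
  by_cases hp : I.p = ⊤
  · left
    have hq : I.q = ⊤ := top_le_iff.mp (hp ▸ I.hle)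
    refine ⟨⟨⊤, ⊤, le_refl ⊤⟩, ⟨Or.inl rfl, Or.inl rfl⟩, ⟨le_of_eq hp.symm, le_top⟩, ?_⟩
    intro J _ hIJ
    exact ⟨le_top, hq ▸ hIJ.2⟩
  · obtain ⟨x, hx⟩ : ∃ x : ℝ, I.p = (x : Rbar) := ⟨I.p.untopD 0, (coe_untop'_eq hp).symm⟩
    by_cases hAne : (S.filter fun s => s ≤ x).Nonempty
    · left
      set A := (S.filter fun s => s ≤ x).max' hAne with hAdef
      obtain ⟨hAS, hAx⟩ := Finset.mem_filter.mp ((S.filter fun s => s ≤ x).max'_mem hAne)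
      have hpA : (A : Rbar) ≤ I.p := by rw [hx]; exact_mod_cast hAx
      have hJp : ∀ J : PDInterval, J.memDgmS S → I.Sub J → J.p ≤ (A : Rbar) := by
        intro J hJ hIJ
        have h1 := hIJ.1
        rw [hx] at h1
        rcases hJ.1 with hJp | ⟨s, hs, hJp⟩
        · rw [hJp] at h1
          exact absurd (top_le_iff.mp h1) (WithTop.coe_ne_top)
        · rw [hJp] at h1 ⊢
          have hsx : s ≤ x := by exact_mod_cast h1
          exact_mod_cast Finset.le_max' (S.filter fun r => r ≤ x) s (Finset.mem_filter.mpr ⟨hs, hsx⟩)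
      by_cases hq : I.q = ⊤
      · refine ⟨PDInterval.mkInf A, ⟨Or.inr ⟨A, hAS, rfl⟩, Or.inl rfl⟩,
          ⟨hpA, le_top⟩, ?_⟩
        intro J hJ hIJ
        refine ⟨hJp J hJ hIJ, ?_⟩
        show (⊤ : Rbar) ≤ J.q
        exact hq ▸ hIJ.2
      · obtain ⟨y, hy⟩ : ∃ y : ℝ, I.q = (y : Rbar) := ⟨I.q.untopD 0, (coe_untop'_eq hq).symm⟩
        by_cases hBne : (S.filter fun s => y ≤ s).Nonempty
        · set B := (S.filter fun s => y ≤ s).min' hBne with hBdef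
          obtain ⟨hBS, hBy⟩ := Finset.mem_filter.mp ((S.filter fun s => y ≤ s).min'_mem hBne)
          have hxy : x ≤ y := by
            have := I.hle; rw [hx, hy] at this; exact_mod_cast this
          have hAB : A ≤ B := le_trans hAx (le_trans hxy hBy)
          have hqB : I.q ≤ ((B : ℝ) : Rbar) := by
            rw [hy]; exact_mod_cast hBy
          refine ⟨PDInterval.mk' A B hAB, ⟨Or.inr ⟨A, hAS, rfl⟩, Or.inr ⟨B, hBS, rfl⟩⟩,
            ⟨hpA, hqB⟩, ?_⟩
          intro J hJ hIJ
          refine ⟨hJp J hJ hIJ, ?_⟩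
          show ((B : ℝ) : Rbar) ≤ J.q
          have h2 := hIJ.2
          rw [hy] at h2
          rcases hJ.2 with hJq | ⟨t, ht, hJq⟩
          · rw [hJq]; exact le_top
          · rw [hJq] at h2 ⊢
            have hyt : y ≤ t := by exact_mod_cast h2
            exact_mod_cast Finset.min'_le _ t (Finset.mem_filter.mpr ⟨ht, hyt⟩)
        · refine ⟨PDInterval.mkInf A, ⟨Or.inr ⟨A, hAS, rfl⟩, Or.inl rfl⟩,
            ⟨hpA, le_top⟩, ?_⟩
          intro J hJ hIJ
          refine ⟨hJp J hJ hIJ, ?_⟩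
          show (⊤ : Rbar) ≤ J.q
          have h2 := hIJ.2
          rw [hy] at h2
          rcases hJ.2 with hJq | ⟨t, ht, hJq⟩
          · rw [hJq]
          · exfalso
            rw [hJq] at h2
            have hyt : y ≤ t := by exact_mod_cast h2
            exact hBne ⟨t, Finset.mem_filter.mpr ⟨ht, hyt⟩⟩
    · right
      intro J hJ hIJ
      have h1 := hIJ.1
      rw [hx] at h1
      rcases hJ.1 with hJp | ⟨s, hs, hJp⟩
      · rw [hJp] at h1
        exact absurd (top_le_iff.mp h1) (WithTop.coe_ne_top)
      · rw [hJp] at h1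
        have hsx : s ≤ x := by exact_mod_cast h1
        exact hAne ⟨s, Finset.mem_filter.mpr ⟨hs, hsx⟩⟩

lemma main_eq (d : PDInterval → G) (S : Finset ℝ)
    (hconst : ∀ I Ibar : PDInterval, IsSmallestContaining S I Ibar → d I = d Ibar)
    (hzero : ∀ I : PDInterval, (∀ J : PDInterval, J.memDgmS S → ¬ I.Sub J) → d I = 0)
    (I : PDInterval) :
    d I = ∑ᶠ (J : PDInterval) (_ : I.Sub J), Ft d S J := by
  have h1 : ∀ J : PDInterval,
      (∑ᶠ (_ : I.Sub J), Ft d S J) = if I.Sub J then Ft d S J else 0 :=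
    fun J => finsum_eq_if
  rw [finsum_congr h1]
  have hsupp : Function.support (fun J => if I.Sub J then Ft d S J else 0)
      ⊆ ↑(DgmFin S) := by
    intro J hJ
    rw [Function.mem_support] at hJ
    by_cases hs : I.Sub J
    · rw [if_pos hs] at hJ
      exact Ft_support_subset d S hJ
    · rw [if_neg hs] at hJ
      exact absurd rfl hJ
  rw [finsum_eq_sum_of_support_subset _ hsupp, ← Finset.sum_filter]
  rcases smallest_or_none S I with ⟨Ibar, hmem, hsub, hmin⟩ | hnone
  · rw [hconst I Ibar ⟨hmem, hsub, hmin⟩]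
    have hfeq : (DgmFin S).filter (fun J => I.Sub J)
        = (DgmFin S).filter (fun J => Ibar.Sub J) := by
      apply Finset.filter_congr
      intro J hJ
      constructor
      · intro h
        exact hmin J (mem_of_mem_DgmFin hJ) h
      · intro h
        exact hsub.trans h
    rw [hfeq, sum_Ft d S Ibar hmem]
  · rw [hzero I hnone]
    have : (DgmFin S).filter (fun J => I.Sub J) = ∅ := by
      apply Finset.filter_eq_empty_iff.mpr
      intro J hJ
      exact hnone J (mem_of_mem_DgmFin hJ)
    rw [this, Finset.sum_empty]

lemma unique_aux (F1 F2 : PDInterval → G)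
    (h1 : (Function.support F1).Finite) (h2 : (Function.support F2).Finite)
    (heq : ∀ I : PDInterval,
      (∑ᶠ (J : PDInterval) (_ : I.Sub J), F1 J) = ∑ᶠ (J : PDInterval) (_ : I.Sub J), F2 J) :
    F1 = F2 := by
  by_contra hne
  set h : PDInterval → G := fun J => F1 J - F2 J with hh
  have hsupp : Function.support h ⊆ Function.support F1 ∪ Function.support F2 := by
    intro J hJ
    rw [Function.mem_support] at hJ
    by_contra hc
    simp only [Set.mem_union, Function.mem_support, not_or, not_not] at hc
    exact hJ (by rw [hh]; simp [hc.1, hc.2])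
  have hfin : (Function.support h).Finite := (h1.union h2).subset hsupp
  have hn : (Function.support h).Nonempty := by
    rcases Set.eq_empty_or_nonempty (Function.support h) with he | hn
    · exfalso
      apply hne
      funext J
      have : h J = 0 := by
        by_contra hc
        exact absurd (Function.mem_support.mpr hc) (he ▸ Set.notMem_empty J)
      exact sub_eq_zero.mp this
    · exact hn
  set s := hfin.toFinset with hsdef
  have hs : s.Nonempty := by
    obtain ⟨J, hJ⟩ := hn
    exact ⟨J, hfin.mem_toFinset.mpr hJ⟩
  have hsne : (s.image (fun J => J.p)).Nonempty := hs.image _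
  set p0 := (s.image fun J => J.p).min' hsne with hp0
  have hex : ∃ I ∈ s, I.p = p0 := by
    obtain ⟨I, hIs, hIp⟩ := Finset.mem_image.mp ((s.image fun J => J.p).min'_mem hsne)
    exact ⟨I, hIs, hIp⟩
  set s' := s.filter (fun J => J.p = p0) with hs'def
  have hs' : s'.Nonempty := by
    obtain ⟨I, hIs, hIp⟩ := hex
    exact ⟨I, Finset.mem_filter.mpr ⟨hIs, hIp⟩⟩
  have hs'ne : (s'.image fun J => J.q).Nonempty := hs'.image _
  set q0 := (s'.image fun J => J.q).max' hs'ne with hq0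
  obtain ⟨I, hIs', hIq⟩ : ∃ I ∈ s', I.q = q0 := by
    obtain ⟨I, hIs, hIp⟩ := Finset.mem_image.mp ((s'.image fun J => J.q).max'_mem hs'ne)
    exact ⟨I, hIs, hIp⟩
  have hIp : I.p = p0 := (Finset.mem_filter.mp hIs').2
  have hImax : ∀ J : PDInterval, h J ≠ 0 → I.Sub J → J = I := by
    intro J hJ0 hIJ
    have hJs : J ∈ s := hfin.mem_toFinset.mpr hJ0
    have hp0le : p0 ≤ J.p := Finset.min'_le _ _ (Finset.mem_image_of_mem _ hJs)
    have hJp : J.p = p0 := le_antisymm (hIp ▸ hIJ.1) hp0le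
    have hJs' : J ∈ s' := Finset.mem_filter.mpr ⟨hJs, hJp⟩
    have hqle : J.q ≤ q0 := Finset.le_max' _ _ (Finset.mem_image_of_mem _ hJs')
    exact PDInterval.ext' (hJp.trans hIp.symm) (le_antisymm (hIq ▸ hqle) hIJ.2)
  have hI0 : h I ≠ 0 := hfin.mem_toFinset.mp (Finset.mem_of_mem_filter _ hIs')
  have key : (∑ᶠ (J : PDInterval) (_ : I.Sub J), h J) = h I := by
    have h1' : ∀ J : PDInterval,
        (∑ᶠ (_ : I.Sub J), h J) = if I.Sub J then h J else 0 := fun J => finsum_eq_if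
    rw [finsum_congr h1']
    have hss : Function.support (fun J => if I.Sub J then h J else 0)
        ⊆ ↑({I} : Finset PDInterval) := by
      intro J hJ
      rw [Function.mem_support] at hJ
      by_cases hsb : I.Sub J
      · rw [if_pos hsb] at hJ
        simp only [Finset.coe_singleton, Set.mem_singleton_iff]
        exact hImax J hJ hsb
      · rw [if_neg hsb] at hJ
        exact absurd rfl hJ
    rw [finsum_eq_sum_of_support_subset _ hss, Finset.sum_singleton,
      if_pos (PDInterval.Sub.refl I)]
  have key2 : (∑ᶠ (J : PDInterval) (_ : I.Sub J), h J) = 0 := by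
    set T := h1.toFinset ∪ h2.toFinset with hT
    have hTsub : ∀ F : PDInterval → G, Function.support F ⊆ ↑T →
        (∑ᶠ (J : PDInterval) (_ : I.Sub J), F J)
          = ∑ J ∈ T, if I.Sub J then F J else 0 := by
      intro F hF
      have hFf : ∀ J : PDInterval,
          (∑ᶠ (_ : I.Sub J), F J) = if I.Sub J then F J else 0 := fun J => finsum_eq_if
      rw [finsum_congr hFf]
      apply finsum_eq_sum_of_support_subset
      intro J hJ
      rw [Function.mem_support] at hJ
      by_cases hsb : I.Sub J
      · rw [if_pos hsb] at hJ
        exact hF (Function.mem_support.mpr hJ)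
      · rw [if_neg hsb] at hJ
        exact absurd rfl hJ
    have hsub1 : Function.support F1 ⊆ ↑T := by
      rw [hT, Finset.coe_union, h1.coe_toFinset, h2.coe_toFinset]
      exact Set.subset_union_left
    have hsub2 : Function.support F2 ⊆ ↑T := by
      rw [hT, Finset.coe_union, h1.coe_toFinset, h2.coe_toFinset]
      exact Set.subset_union_right
    have hsubh : Function.support h ⊆ ↑T := by
      rw [hT, Finset.coe_union, h1.coe_toFinset, h2.coe_toFinset]
      exact hsupp
    rw [hTsub h hsubh]
    have hpt : ∀ J ∈ T, (if I.Sub J then h J else 0)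
        = (if I.Sub J then F1 J else 0) - (if I.Sub J then F2 J else 0) := by
      intro J _
      by_cases hsb : I.Sub J
      · simp [hsb, hh]
      · simp [hsb]
    rw [Finset.sum_congr rfl hpt, Finset.sum_sub_distrib, ← hTsub F1 hsub1,
      ← hTsub F2 hsub2, heq I, sub_self]
  exact hI0 (key ▸ key2)

lemma D_zero_below (d : PDInterval → G) (S : Finset ℝ)
    (hzero : ∀ I : PDInterval, (∀ J : PDInterval, J.memDgmS S → ¬ I.Sub J) → d I = 0)
    {a' : ℝ} (ha : ∀ s ∈ S, a' < s) (q : Rbar) : D d (a' : Rbar) q = 0 := by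
  rw [D]
  split
  · apply hzero
    rintro J ⟨hJp, _⟩ ⟨hle1, _⟩
    rcases hJp with hJp | ⟨s, hs, hJp⟩
    · rw [hJp] at hle1
      exact WithTop.coe_ne_top (top_le_iff.mp hle1)
    · rw [hJp] at hle1
      have hle2 : ((s : ℝ) : Rbar) ≤ ((a' : ℝ) : Rbar) := hle1
      have : s ≤ a' := by exact_mod_cast hle2
      exact absurd this (not_le.mpr (ha s hs))
  · rfl

lemma nxtF_eq (S : Finset ℝ) {b : ℝ} {b' : Rbar}
    (h : (b' = ⊤ ∧ ∀ s ∈ S, s ≤ b) ∨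
      (∃ s' ∈ S, b' = (s' : Rbar) ∧ b < s' ∧ ∀ s ∈ S, b < s → s' ≤ s)) :
    nxtF S b = b' := by
  rcases h with ⟨rfl, hall⟩ | ⟨s', hs', rfl, hbs', hmin⟩
  · rw [nxtF, dif_neg]
    rintro ⟨y, hy⟩
    obtain ⟨hyS, hby⟩ := Finset.mem_filter.mp hy
    exact absurd (hall y hyS) (not_le.mpr hby)
  · have hne : (S.filter fun x => b < x).Nonempty :=
      ⟨s', Finset.mem_filter.mpr ⟨hs', hbs'⟩⟩
    rw [nxtF, dif_pos hne]
    have : (S.filter fun x => b < x).min' hne = s' := by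
      apply le_antisymm
      · exact Finset.min'_le _ _ (Finset.mem_filter.mpr ⟨hs', hbs'⟩)
      · apply Finset.le_min'
        intro y hy
        obtain ⟨hyS, hby⟩ := Finset.mem_filter.mp hy
        exact hmin y hyS hby
    exact_mod_cast this

lemma pred_eq_of (S : Finset ℝ) {a a' : ℝ} (ha' : a' < a)
    (h : a' ∈ S ∧ ∀ s ∈ S, s < a → s ≤ a') :
    ∃ hne : (S.filter fun x => x < a).Nonempty, (S.filter fun x => x < a).max' hne = a' := by
  obtain ⟨hmem, hmax⟩ := h
  have hne : (S.filter fun x => x < a).Nonempty := ⟨a', Finset.mem_filter.mpr ⟨hmem, ha'⟩⟩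
  refine ⟨hne, le_antisymm ?_ ?_⟩
  · apply Finset.max'_le
    intro y hy
    obtain ⟨hyS, hya⟩ := Finset.mem_filter.mp hy
    exact hmax y hyS hya
  · exact Finset.le_max' (S.filter fun x => x < a) a' (Finset.mem_filter.mpr ⟨hmem, ha'⟩)

lemma pred_empty_of (S : Finset ℝ) {a : ℝ} (h : ∀ s ∈ S, a ≤ s) :
    ¬ (S.filter fun x => x < a).Nonempty := by
  rintro ⟨y, hy⟩
  obtain ⟨hyS, hya⟩ := Finset.mem_filter.mp hy
  exact absurd (h y hyS) (not_le.mpr hya)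

end MobiusAux


end MobiusAuxSection

/-- **Möbius inversion for constructible rank-type functions**: let `G` be an abelian group,
`S` a finite subset of `ℝ` (with `∞` implicitly adjoined) and `d : Dgm → G` a function which
only depends on the smallest interval of `Dgm(S)` containing the argument, and which vanishes
on intervals contained in no interval of `Dgm(S)`.  Then there is a unique finitely supported
`Ft : Dgm → G` with `d(I) = ∑_{J ⊇ I} Ft(J)` for all `I`; moreover `Ft` vanishes outside
`Dgm(S)` and is given by the explicit four-corner (resp. two-corner) formulas, where for
`b ∈ S` the value `b'` is the successor of `b` in `S` (or `∞` if `b = max S`) and `a'` is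
the predecessor of `a` in `S` (or any value `< min S`). -/
theorem mobius_inversion_of_constructible {G : Type*} [AddCommGroup G] (S : Finset ℝ)
    (d : PDInterval → G)
    (hconst : ∀ I Ibar : PDInterval, IsSmallestContaining S I Ibar → d I = d Ibar)
    (hzero : ∀ I : PDInterval, (∀ J : PDInterval, J.memDgmS S → ¬ I.Sub J) → d I = 0) :
    ∃ Ft : PDInterval → G,
      -- `Ft` is finitely supported and satisfies the Möbius inversion formula …
      (((Function.support Ft).Finite ∧
          ∀ I : PDInterval, d I = ∑ᶠ (J : PDInterval) (_ : I.Sub J), Ft J) ∧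
        -- … and is the unique such function
        (∀ Ft' : PDInterval → G,
          ((Function.support Ft').Finite ∧
            ∀ I : PDInterval, d I = ∑ᶠ (J : PDInterval) (_ : I.Sub J), Ft' J) → Ft' = Ft)) ∧
      -- `Ft` vanishes outside `Dgm(S)`
      (∀ I : PDInterval, ¬ I.memDgmS S → Ft I = 0) ∧
      -- the four-corner formula for `Ft([a, b))`, `a ≤ b` in `S`
      (∀ a ∈ S, ∀ b ∈ S, ∀ hab : a ≤ b,
        ∀ (b' : Rbar) (hbb' : (b : Rbar) ≤ b') (a' : ℝ) (ha' : a' < a),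
        ((b' = ⊤ ∧ ∀ s ∈ S, s ≤ b) ∨
          (∃ s' ∈ S, b' = (s' : Rbar) ∧ b < s' ∧ ∀ s ∈ S, b < s → s' ≤ s)) →
        ((∀ s ∈ S, a ≤ s) ∨ (a' ∈ S ∧ ∀ s ∈ S, s < a → s ≤ a')) →
        Ft (PDInterval.mk' a b hab) =
          d (PDInterval.mk' a b hab)
          - d ⟨(a : Rbar), b', le_trans (by exact_mod_cast hab) hbb'⟩
          + d ⟨(a' : Rbar), b',
              le_trans (by exact_mod_cast (ha'.le.trans hab)) hbb'⟩
          - d (PDInterval.mk' a' b (by linarith))) ∧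
      -- the two-corner formula for `Ft([a, ∞))`, `a ∈ S`
      (∀ a ∈ S, ∀ (a' : ℝ), a' < a →
        ((∀ s ∈ S, a ≤ s) ∨ (a' ∈ S ∧ ∀ s ∈ S, s < a → s ≤ a')) →
        Ft (PDInterval.mkInf a) = d (PDInterval.mkInf a) - d (PDInterval.mkInf a')) := by
  classical
  have hFtfin : (Function.support (MobiusAux.Ft d S)).Finite :=
    Set.Finite.subset (MobiusAux.DgmFin S).finite_toSet (MobiusAux.Ft_support_subset d S)
  refine ⟨MobiusAux.Ft d S, ⟨⟨hFtfin, MobiusAux.main_eq d S hconst hzero⟩, ?_⟩, ?_, ?_, ?_⟩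
  · rintro Ft' ⟨hfin', hsum'⟩
    exact MobiusAux.unique_aux Ft' (MobiusAux.Ft d S) hfin' hFtfin
      (fun I => (hsum' I).symm.trans (MobiusAux.main_eq d S hconst hzero I))
  · intro I hI
    exact MobiusAux.Ft_not_mem d S hI
  · -- four-corner formula
    intro a ha b hb hab b' hbb' a' ha' hB hA
    have hab' : (a : Rbar) ≤ (b : Rbar) := by exact_mod_cast hab
    have hpf1 : (a : Rbar) ≤ b' := le_trans hab' hbb'
    have ha'b : (a' : ℝ) ≤ b := le_trans ha'.le hab
    have hpf2 : (a' : Rbar) ≤ b' := le_trans (by exact_mod_cast ha'b) hbb'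
    rw [MobiusAux.Ft_mk' d S hab ha hb]
    simp only [MobiusAux.prdTerm]
    have hg : ∀ x : ℝ, MobiusAux.g d S x ((b : ℝ) : Rbar)
        = MobiusAux.D d (x : Rbar) (b : Rbar) - MobiusAux.D d (x : Rbar) b' := by
      intro x
      rw [MobiusAux.g_coe, MobiusAux.nxtF_eq S hB]
    have e1 : MobiusAux.D d (a : Rbar) (b : Rbar) = d (PDInterval.mk' a b hab) :=
      MobiusAux.D_eq d (PDInterval.mk' a b hab)
    have e2 : MobiusAux.D d (a : Rbar) b' = d ⟨(a : Rbar), b', hpf1⟩ :=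
      MobiusAux.D_eq d ⟨(a : Rbar), b', hpf1⟩
    rcases hA with hAll | hpred
    · have hlt : ∀ s ∈ S, a' < s := fun s hs => lt_of_lt_of_le ha' (hAll s hs)
      have e3 : d (⟨(a' : Rbar), b', hpf2⟩ : PDInterval) = 0 :=
        (MobiusAux.D_eq d ⟨(a' : Rbar), b', hpf2⟩).symm.trans
          (MobiusAux.D_zero_below d S hzero hlt b')
      have e4 : d (PDInterval.mk' a' b ha'b) = 0 :=
        (MobiusAux.D_eq d (PDInterval.mk' a' b ha'b)).symm.trans
          (MobiusAux.D_zero_below d S hzero hlt (b : Rbar))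
      rw [dif_neg (MobiusAux.pred_empty_of S hAll), hg a, e1, e2]
      show d (PDInterval.mk' a b hab) - d ⟨(a : Rbar), b', hpf1⟩ - 0 =
        d (PDInterval.mk' a b hab) - d ⟨(a : Rbar), b', hpf1⟩
          + d ⟨(a' : Rbar), b', hpf2⟩ - d (PDInterval.mk' a' b ha'b)
      rw [e3, e4]
      abel
    · obtain ⟨hne, hmaxeq⟩ := MobiusAux.pred_eq_of S ha' hpred
      have e3 : MobiusAux.D d (a' : Rbar) b' = d ⟨(a' : Rbar), b', hpf2⟩ :=
        MobiusAux.D_eq d ⟨(a' : Rbar), b', hpf2⟩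
      have e4 : MobiusAux.D d (a' : Rbar) (b : Rbar) = d (PDInterval.mk' a' b ha'b) :=
        MobiusAux.D_eq d (PDInterval.mk' a' b ha'b)
      rw [dif_pos hne, hmaxeq, hg a, hg a', e1, e2, e3, e4]
      show d (PDInterval.mk' a b hab) - d ⟨(a : Rbar), b', hpf1⟩ -
          (d (PDInterval.mk' a' b ha'b) - d ⟨(a' : Rbar), b', hpf2⟩) =
        d (PDInterval.mk' a b hab) - d ⟨(a : Rbar), b', hpf1⟩
          + d ⟨(a' : Rbar), b', hpf2⟩ - d (PDInterval.mk' a' b ha'b)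
      abel
  · -- two-corner formula
    intro a ha a' ha' hA
    rw [MobiusAux.Ft_mkInf d S ha]
    simp only [MobiusAux.prdTerm, MobiusAux.g_top]
    have e1 : MobiusAux.D d (a : Rbar) ⊤ = d (PDInterval.mkInf a) :=
      MobiusAux.D_eq d (PDInterval.mkInf a)
    have e2 : MobiusAux.D d (a' : Rbar) ⊤ = d (PDInterval.mkInf a') :=
      MobiusAux.D_eq d (PDInterval.mkInf a')
    rcases hA with hAll | hpred
    · have hlt : ∀ s ∈ S, a' < s := fun s hs => lt_of_lt_of_le ha' (hAll s hs)
      have e3 : d (PDInterval.mkInf a') = 0 :=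
        e2.symm.trans (MobiusAux.D_zero_below d S hzero hlt ⊤)
      rw [dif_neg (MobiusAux.pred_empty_of S hAll), e1, e3]
    · obtain ⟨hne, hmaxeq⟩ := MobiusAux.pred_eq_of S ha' hpred
      rw [dif_pos hne, hmaxeq, e1, e2]
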